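/- Let G be a finite nilpotent group and let x, y ∈ G. Then ⟨x, y⟩ = G if and only if for all g, h ∈ G, ⟨g⁻¹xg, h⁻¹yh⟩ = G. (In a nilpotent group, generation and invariable generation by conjugacy classes coincide.) -/

import Mathlib

open Subgroup
open scoped commutatorElement

lemma commutator_le_coatom {G : Type*} [Group G] [Group.IsNilpotent G]
    {M : Subgroup G} (hM : IsCoatom M) : commutator G ≤ M := by
  have hnorm : M.Normal :=
    Subgroup.NormalizerCondition.normal_of_coatom M (normalizerCondition_of_isNilpotent (G := G)) hM
  have hcomm : ∀ a b : G ⧸ M, a * b = b * a := by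
    rcases subsingleton_or_nontrivial (G ⧸ M) with hs | hn
    · intro a b; exact Subsingleton.elim _ _
    · obtain ⟨a, ha⟩ := exists_ne (1 : G ⧸ M)
      have htop : Subgroup.zpowers a = ⊤ := by
        have hlt : M < (Subgroup.zpowers a).comap (QuotientGroup.mk' M) := by
          refine lt_of_le_of_ne ?_ ?_
          · intro m hm
            simp only [Subgroup.mem_comap, QuotientGroup.mk'_apply]
            have : (QuotientGroup.mk m : G ⧸ M) = 1 := (QuotientGroup.eq_one_iff m).2 hm
            rw [this]; exact one_mem _
          · intro hEq
            obtain ⟨g, hg⟩ := QuotientGroup.mk'_surjective M a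
            have hgmem : g ∈ (Subgroup.zpowers a).comap (QuotientGroup.mk' M) := by
              simp [Subgroup.mem_comap, hg, Subgroup.mem_zpowers]
            rw [← hEq] at hgmem
            exact ha (by rw [← hg]; exact (QuotientGroup.eq_one_iff g).2 hgmem)
        have := hM.2 _ hlt
        have hmap := Subgroup.map_comap_eq_self_of_surjective
          (QuotientGroup.mk'_surjective M) (Subgroup.zpowers a)
        rw [this] at hmap
        rw [← hmap]
        exact (Subgroup.map_top_of_surjective _ (QuotientGroup.mk'_surjective M))
      intro b c
      obtain ⟨m, hm⟩ := (Subgroup.mem_zpowers_iff).1 (htop ▸ Subgroup.mem_top b)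
      obtain ⟨n, hn⟩ := (Subgroup.mem_zpowers_iff).1 (htop ▸ Subgroup.mem_top c)
      rw [← hm, ← hn, ← zpow_add, ← zpow_add, add_comm]
  rw [_root_.commutator_def, Subgroup.commutator_le]
  intro g _ h _
  rw [← QuotientGroup.eq_one_iff]
  have : (QuotientGroup.mk (⁅g, h⁆) : G ⧸ M) = ⁅(g : G ⧸ M), (h : G ⧸ M)⁆ := rfl
  rw [this, commutatorElement_def, hcomm (g : G ⧸ M) (h : G ⧸ M)]
  group

lemma commutator_le_frattini {G : Type*} [Group G] [Group.IsNilpotent G] :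
    commutator G ≤ frattini G := by
  unfold frattini Order.radical
  exact le_iInf₂ fun M hM => commutator_le_coatom hM

theorem nilpotent_generation_iff_invariable_generation (G : Type*) [Group G] [Finite G]
    [Group.IsNilpotent G] (x y : G) :
    Subgroup.closure ({x, y} : Set G) = ⊤ ↔
      ∀ g h : G, Subgroup.closure ({g⁻¹ * x * g, h⁻¹ * y * h} : Set G) = ⊤ := by
  constructor
  · intro hxy g h
    set K := Subgroup.closure ({g⁻¹ * x * g, h⁻¹ * y * h} : Set G) with hK
    have hsup : K ⊔ commutator G = ⊤ := by
      rw [eq_top_iff, ← hxy, Subgroup.closure_le]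
      rintro z (rfl | rfl)
      · have h1 : (g⁻¹ * z * g : G) ∈ K ⊔ commutator G :=
          le_sup_left (α := Subgroup G) (Subgroup.subset_closure (Set.mem_insert _ _))
        have h2 : (⁅g⁻¹, z⁻¹⁆ : G) ∈ K ⊔ commutator G :=
          le_sup_right (α := Subgroup G) (commutator_mem_commutator (mem_top _) (mem_top _))
        have : z = (g⁻¹ * z * g) * ⁅g⁻¹, z⁻¹⁆ := by group
        rw [this]; exact mul_mem h1 h2
      · have h1 : (h⁻¹ * z * h : G) ∈ K ⊔ commutator G :=
          le_sup_left (α := Subgroup G)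
            (Subgroup.subset_closure (Set.mem_insert_of_mem _ rfl))
        have h2 : (⁅h⁻¹, z⁻¹⁆ : G) ∈ K ⊔ commutator G :=
          le_sup_right (α := Subgroup G) (commutator_mem_commutator (mem_top _) (mem_top _))
        have : z = (h⁻¹ * z * h) * ⁅h⁻¹, z⁻¹⁆ := by group
        rw [this]; exact mul_mem h1 h2
    have hsup' : K ⊔ frattini G = ⊤ :=
      eq_top_iff.2 (hsup ▸ sup_le_sup_left commutator_le_frattini K)
    exact frattini_nongenerating hsup'
  · intro h
    have := h 1 1
    simpa using this
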